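/- Let d ≥ 1, let D ⊂ ℝ^d be a convex body (a convex compact set with nonempty interior), let x be an interior point of D, let 0 < μ < 1, and let P be a real polynomial in d variables of total degree at most n satisfying P(x) = 1 and ‖P‖²_{L²(D)} = λ_n(D,x), where λ_n(D,x) := min { ∫_D f(y)² dy : f a real polynomial in d variables of total degree ≤ n, f(x)=1 }. Then sup_{y ∈ D_{1−μ,x}} |P(y)| ≤ μ^{-d/2}, where D_{1−μ,x} := x + (1−μ)(D − x). -/

import Mathlib

open MeasureTheory Set

/-- The Christoffel function (uniform weight) of a compact set in `ℝ^d`: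
`λ_n(D,x) = inf { ∫_D P(y)² dy : P a polynomial in d variables of total degree ≤ n, P(x) = 1 }`. -/
noncomputable def christoffelD (d : ℕ) (n : ℕ) (D : Set (EuclideanSpace ℝ (Fin d)))
    (x : EuclideanSpace ℝ (Fin d)) : ℝ :=
  sInf { I : ℝ | ∃ P : MvPolynomial (Fin d) ℝ, P.totalDegree ≤ n ∧
    MvPolynomial.eval x P = 1 ∧ I = ∫ y in D, (MvPolynomial.eval y P) ^ 2 }

open MvPolynomial in
lemma aux_totalDegree_bind₁_le {d : ℕ} (s : Fin d → MvPolynomial (Fin d) ℝ)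
    (hs : ∀ i, (s i).totalDegree ≤ 1) (P : MvPolynomial (Fin d) ℝ) :
    (bind₁ s P).totalDegree ≤ P.totalDegree := by
  conv_lhs => rw [P.as_sum]
  rw [map_sum]
  refine totalDegree_finsetSum_le fun m hm => ?_
  rw [bind₁_monomial]
  refine (totalDegree_mul _ _).trans ?_
  rw [totalDegree_C, zero_add]
  refine (totalDegree_finset_prod _ _).trans ?_
  refine le_trans ?_ (le_totalDegree hm)
  rw [Finsupp.sum]
  refine Finset.sum_le_sum fun i _ => ?_
  exact (totalDegree_pow _ _).trans (by simpa using Nat.mul_le_mul_left (m i) (hs i))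

/-- **Remark (norm control on convex bodies, `ℝ^d` version).** If `D ⊂ ℝ^d` (`d ≥ 1`) is a
convex body, `x ∈ int D`, `0 < μ < 1`, and `P` is a real polynomial in `d` variables of total
degree at most `n` satisfying `P(x) = 1` and `‖P‖²_{L²(D)} = λ_n(D,x)`, then
`|P(y)| ≤ μ^{-d/2}` for all `y ∈ D_{1-μ,x} = x + (1-μ)(D-x)`. -/
theorem stmt_4 (d : ℕ) (hd : 1 ≤ d) (n : ℕ) (hn : 0 < n)
    (D : Set (EuclideanSpace ℝ (Fin d)))
    (hconv : Convex ℝ D) (hcomp : IsCompact D) (hint : (interior D).Nonempty)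
    (x : EuclideanSpace ℝ (Fin d)) (hx : x ∈ interior D)
    (μ : ℝ) (hμ0 : 0 < μ) (hμ1 : μ < 1)
    (P : MvPolynomial (Fin d) ℝ) (hdeg : P.totalDegree ≤ n)
    (hPx : MvPolynomial.eval x P = 1)
    (hPmin : ∫ y in D, (MvPolynomial.eval y P) ^ 2 = christoffelD d n D x) :
    ∀ y ∈ (fun z => x + (1 - μ) • (z - x)) '' D,
      |MvPolynomial.eval y P| ≤ μ ^ (-(d : ℝ) / 2) := by
  classical
  clear hint
  -- continuity of evaluation
  have hPc : Continuous fun z : (EuclideanSpace ℝ (Fin d)) => MvPolynomial.eval z P :=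
    (MvPolynomial.continuous_eval P).comp (EuclideanSpace.equiv (Fin d) ℝ).continuous
  set g : (EuclideanSpace ℝ (Fin d)) → ℝ := fun z => (MvPolynomial.eval z P) ^ 2 with hg_def
  have hgc : Continuous g := hPc.pow 2
  have hDmeas : MeasurableSet D := hcomp.measurableSet
  have hgint : IntegrableOn g D volume := hgc.continuousOn.integrableOn_compact hcomp
  set L : ℝ := ∫ z in D, g z with hL_def
  -- L > 0
  have hLpos : 0 < L := by
    set U : Set (EuclideanSpace ℝ (Fin d)) := (interior D) ∩ (g ⁻¹' Ioi (1/2 : ℝ)) with hU_def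
    have hUopen : IsOpen U := isOpen_interior.inter (hgc.isOpen_preimage _ isOpen_Ioi)
    have hxU : x ∈ U := ⟨hx, by simp [hg_def, hPx]; norm_num⟩
    have hUD : U ⊆ D := fun z hz => interior_subset hz.1
    have hUpos : 0 < volume U := hUopen.measure_pos volume ⟨x, hxU⟩
    have hUfin : volume U < ⊤ := lt_of_le_of_lt (measure_mono hUD) hcomp.measure_lt_top
    have h1 : (∫ _z in U, (1/2 : ℝ)) ≤ ∫ z in U, g z := by
      refine setIntegral_mono_on (integrableOn_const hUfin.ne)
        (hgint.mono_set hUD) hUopen.measurableSet ?_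
      exact fun z hz => le_of_lt hz.2
    have h1' : (∫ _z in U, (1/2 : ℝ)) = (volume U).toReal * (1/2 : ℝ) := by
      rw [setIntegral_const, smul_eq_mul]
      rfl
    rw [h1'] at h1
    have h2 : ∫ z in U, g z ≤ L := by
      refine setIntegral_mono_set hgint
        (Filter.Eventually.of_forall fun z => sq_nonneg _)
        (HasSubset.Subset.eventuallyLE hUD)
    have : 0 < (volume U).toReal * (1/2 : ℝ) := by
      have := ENNReal.toReal_pos hUpos.ne' hUfin.ne
      linarith
    linarith
  -- bddBelow of the Christoffel set
  have hbdd : BddBelow { I : ℝ | ∃ Q : MvPolynomial (Fin d) ℝ, Q.totalDegree ≤ n ∧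
      MvPolynomial.eval x Q = 1 ∧ I = ∫ y in D, (MvPolynomial.eval y Q) ^ 2 } := by
    refine ⟨0, fun I hI => ?_⟩
    obtain ⟨Q, -, -, rfl⟩ := hI
    exact setIntegral_nonneg hDmeas fun z _ => sq_nonneg _
  intro y hy
  obtain ⟨w, hwD, rfl⟩ := hy
  set y : (EuclideanSpace ℝ (Fin d)) := x + (1 - μ) • (w - x) with hy_def
  set a : ℝ := MvPolynomial.eval y P with ha_def
  rcases eq_or_ne a 0 with ha | ha
  · rw [ha]
    simpa using (Real.rpow_pos_of_pos hμ0 _).le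
  -- the affine substitution
  set c : (EuclideanSpace ℝ (Fin d)) := y - μ • x with hc_def
  set T : (EuclideanSpace ℝ (Fin d)) → (EuclideanSpace ℝ (Fin d)) := fun z => μ • z + c with hT_def
  have hTD : ∀ z ∈ D, T z ∈ D := by
    intro z hz
    have h : T z = (1 - μ) • w + μ • z := by
      simp only [hT_def, hc_def, hy_def]
      module
    rw [h, add_comm]
    exact hconv hz hwD hμ0.le (by linarith) (by ring)
  have hTinj : Function.Injective T := by
    intro z₁ z₂ h
    simp only [hT_def] at h
    have := add_right_cancel h
    exact smul_right_injective (EuclideanSpace ℝ (Fin d)) hμ0.ne' this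
  set s : Fin d → MvPolynomial (Fin d) ℝ :=
    fun i => MvPolynomial.C (c i) + MvPolynomial.C μ * MvPolynomial.X i with hs_def
  have hs1 : ∀ i, (s i).totalDegree ≤ 1 := by
    intro i
    refine (MvPolynomial.totalDegree_add _ _).trans (max_le (by simp) ?_)
    exact (MvPolynomial.totalDegree_mul _ _).trans (by simp)
  set Q : MvPolynomial (Fin d) ℝ := MvPolynomial.bind₁ s P with hQ_def
  have hQeval : ∀ z : (EuclideanSpace ℝ (Fin d)), MvPolynomial.eval z Q = MvPolynomial.eval (T z) P := by
    intro z
    have h1 : MvPolynomial.eval z Q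
        = MvPolynomial.eval (fun i => MvPolynomial.eval z (s i)) P :=
      MvPolynomial.eval₂Hom_bind₁ (RingHom.id ℝ) z s P
    rw [h1]
    have hpt : (fun i => MvPolynomial.eval z (s i)) = fun i : Fin d => (T z) i := by
      funext i
      show MvPolynomial.eval z (s i) = (μ • z + c) i
      simp [hs_def, PiLp.add_apply, PiLp.smul_apply, smul_eq_mul, add_comm]
    rw [hpt]
  have hQdeg : Q.totalDegree ≤ n := (aux_totalDegree_bind₁_le s hs1 P).trans hdeg
  have hTx : T x = y := by
    simp only [hT_def, hc_def]
    module
  have hQx : MvPolynomial.eval x Q = a := by rw [hQeval x, hTx]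
  -- the competitor polynomial
  set R : MvPolynomial (Fin d) ℝ := MvPolynomial.C a⁻¹ * Q with hR_def
  have hRdeg : R.totalDegree ≤ n :=
    (MvPolynomial.totalDegree_mul _ _).trans (by simpa using hQdeg)
  have hRx : MvPolynomial.eval x R = 1 := by
    simp [hR_def, hQx, inv_mul_cancel₀ ha]
  have hmem : (∫ z in D, (MvPolynomial.eval z R) ^ 2) ∈
      { I : ℝ | ∃ Q : MvPolynomial (Fin d) ℝ, Q.totalDegree ≤ n ∧
        MvPolynomial.eval x Q = 1 ∧ I = ∫ y in D, (MvPolynomial.eval y Q) ^ 2 } := by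
    exact ⟨R, hRdeg, hRx, rfl⟩
  have hLle : L ≤ ∫ z in D, (MvPolynomial.eval z R) ^ 2 := by
    rw [hPmin, christoffelD]
    exact csInf_le hbdd hmem
  -- rewrite the competitor integral
  set I : ℝ := ∫ z in D, (MvPolynomial.eval z Q) ^ 2 with hI_def
  have hRint : (∫ z in D, (MvPolynomial.eval z R) ^ 2) = a⁻¹ ^ 2 * I := by
    rw [hI_def, ← MeasureTheory.integral_const_mul]
    congr 1
    funext z
    simp [hR_def, mul_pow]
  -- change of variables estimate : I ≤ (μ^d)⁻¹ * L
  set K : Set (EuclideanSpace ℝ (Fin d)) := T '' D with hK_def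
  have hTcont : Continuous T := by
    exact (continuous_const_smul μ).add continuous_const
  have hKmeas : MeasurableSet K := (hcomp.image hTcont).measurableSet
  have hKD : K ⊆ D := by
    rintro u ⟨z, hz, rfl⟩
    exact hTD z hz
  have hIle : I ≤ (μ ^ d)⁻¹ * L := by
    have step1 : I = ∫ z in D, g (T z) := by
      rw [hI_def]
      congr 1
      funext z
      rw [hg_def, hQeval z]
    have step2 : (fun z => indicator D (fun z => g (T z)) z)
        = fun z => indicator K g (T z) := by
      funext z
      by_cases hz : z ∈ D
      · rw [indicator_of_mem hz, indicator_of_mem (Set.mem_image_of_mem T hz)]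
      · rw [indicator_of_notMem hz, indicator_of_notMem]
        rintro ⟨z', hz', hzz⟩
        exact hz (hTinj hzz ▸ hz')
    have step3 : ∫ z in D, g (T z) = ∫ z, indicator K g (T z) := by
      rw [← integral_indicator hDmeas, step2]
    have step4 : ∫ z, indicator K g (T z)
        = |((μ : ℝ) ^ Module.finrank ℝ (EuclideanSpace ℝ (Fin d)))⁻¹| • ∫ u, indicator K g (u + c) := by
      have := Measure.integral_comp_smul (volume : Measure (EuclideanSpace ℝ (Fin d)))
        (fun u => indicator K g (u + c)) μ
      simpa [hT_def] using this
    have step5 : (∫ u, indicator K g (u + c)) = ∫ u, indicator K g u :=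
      integral_add_right_eq_self (fun u => indicator K g u) c
    have step6 : (∫ u, indicator K g u) = ∫ u in K, g u := integral_indicator hKmeas
    have step7 : (∫ u in K, g u) ≤ L :=
      setIntegral_mono_set hgint (Filter.Eventually.of_forall fun z => sq_nonneg _)
        (HasSubset.Subset.eventuallyLE hKD)
    have hrank : Module.finrank ℝ (EuclideanSpace ℝ (Fin d)) = d := finrank_euclideanSpace_fin
    have habs : |((μ : ℝ) ^ Module.finrank ℝ (EuclideanSpace ℝ (Fin d)))⁻¹| = (μ ^ d)⁻¹ := by
      rw [hrank, abs_of_nonneg (by positivity)]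
    calc I = ∫ z, indicator K g (T z) := by rw [step1, step3]
      _ = |((μ : ℝ) ^ Module.finrank ℝ (EuclideanSpace ℝ (Fin d)))⁻¹| • ∫ u, indicator K g (u + c) := step4
      _ = (μ ^ d)⁻¹ * ∫ u in K, g u := by rw [step5, step6, habs, smul_eq_mul]
      _ ≤ (μ ^ d)⁻¹ * L := by
          exact mul_le_mul_of_nonneg_left step7 (by positivity)
  -- combine
  have ha2 : (0 : ℝ) < a ^ 2 := by positivity
  have hm : (0 : ℝ) < μ ^ d := by positivity
  have hfinal : a ^ 2 ≤ (μ ^ d)⁻¹ := by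
    have h1 : L ≤ a⁻¹ ^ 2 * ((μ ^ d)⁻¹ * L) := by
      calc L ≤ a⁻¹ ^ 2 * I := by rw [← hRint]; exact hLle
        _ ≤ a⁻¹ ^ 2 * ((μ ^ d)⁻¹ * L) :=
            mul_le_mul_of_nonneg_left hIle (by positivity)
    have h2 : a⁻¹ ^ 2 * ((μ ^ d)⁻¹ * L) = L / (a ^ 2 * μ ^ d) := by
      field_simp
      try ring
    rw [h2] at h1
    have h3 : L * (a ^ 2 * μ ^ d) ≤ L := by
      rw [← le_div_iff₀ (by positivity)]
      exact h1
    have h4 : a ^ 2 * μ ^ d ≤ 1 := by nlinarith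
    rw [inv_eq_one_div, le_div_iff₀ hm]
    linarith
  -- conclude with square roots
  have : |a| = Real.sqrt (a ^ 2) := (Real.sqrt_sq_eq_abs a).symm
  rw [this]
  have hμd : ((μ : ℝ) ^ d)⁻¹ = μ ^ (-(d : ℝ)) := by
    rw [← Real.rpow_natCast μ d, ← Real.rpow_neg hμ0.le]
  calc Real.sqrt (a ^ 2) ≤ Real.sqrt ((μ ^ d)⁻¹) := Real.sqrt_le_sqrt hfinal
    _ = μ ^ (-(d : ℝ) / 2) := by
        rw [hμd, Real.sqrt_eq_rpow, ← Real.rpow_mul hμ0.le]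
        ring_nf
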